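/- arXiv:1910.04568 — 5 statements merged into one kernel-verified Lean document; each statement's English description precedes it below -/
import Mathlib

section
/- Let Δ be a base of an irreducible root system spanning a Euclidean space with Weyl-invariant inner product. Then the inverse of the Gram matrix ((α,β))_{α,β∈Δ} has all entries strictly positive. -/
open Finset
open scoped RealInnerProductSpace
open Matrix

/-- `Δ` is a base (set of simple roots) of a (reduced, crystallographic) root system `Φ`
spanning the Euclidean space `E`.  Since the reflections used here are the orthogonal
reflections with respect to the inner product, the inner product is automatically
invariant under the Weyl group. -/
structure IsRootSystemBase {E : Type*} [NormedAddCommGroup E] [InnerProductSpace ℝ E]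
    [FiniteDimensional ℝ E] (Φ : Set E) (Δ : Finset E) : Prop where
  subset : (Δ : Set E) ⊆ Φ
  span_top : Submodule.span ℝ (Δ : Set E) = ⊤
  indep : LinearIndependent ℝ (fun α : Δ => (α : E))
  ne_zero : ∀ α ∈ Φ, α ≠ (0 : E)
  reflect_mem : ∀ α ∈ Φ, ∀ β ∈ Φ, β - (2 * ⟪α, β⟫ / ⟪α, α⟫) • α ∈ Φ
  crystallographic : ∀ α ∈ Φ, ∀ β ∈ Φ, ∃ n : ℤ, 2 * ⟪α, β⟫ / ⟪α, α⟫ = (n : ℝ)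
  pos_or_neg : ∀ x ∈ Φ,
      (∃ c : E → ℝ, (∀ β ∈ Δ, 0 ≤ c β) ∧ x = ∑ β ∈ Δ, c β • β) ∨
      (∃ c : E → ℝ, (∀ β ∈ Δ, 0 ≤ c β) ∧ x = -∑ β ∈ Δ, c β • β)

/-- The root system `Φ` with base `Δ` is irreducible: `Δ` cannot be split into two
nonempty mutually orthogonal pieces. -/
def IsIrreducibleBase {E : Type*} [NormedAddCommGroup E] [InnerProductSpace ℝ E] [DecidableEq E]
    (Δ : Finset E) : Prop :=
  ∀ s ⊆ Δ, s.Nonempty → s ≠ Δ → ∃ α ∈ s, ∃ β ∈ Δ \ s, ⟪α, β⟫ ≠ (0 : ℝ)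

lemma obtuse {E : Type*} [NormedAddCommGroup E] [InnerProductSpace ℝ E]
    [FiniteDimensional ℝ E] {Φ : Set E} {Δ : Finset E} (hbase : IsRootSystemBase Φ Δ)
    {α β : E} (hα : α ∈ Δ) (hβ : β ∈ Δ) (hne : α ≠ β) : ⟪α, β⟫ ≤ 0 := by
  classical
  by_contra h
  push_neg at h
  have hαΦ := hbase.subset hα
  have hβΦ := hbase.subset hβ
  have hα0 : α ≠ 0 := hbase.ne_zero α hαΦ
  have haa : (0:ℝ) < ⟪α, α⟫ := by
    rw [real_inner_self_eq_norm_sq]; exact pow_pos (norm_pos_iff.mpr hα0) 2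
  set t : ℝ := 2 * ⟪α, β⟫ / ⟪α, α⟫ with ht
  have htpos : 0 < t := div_pos (by linarith) haa
  have hγ : β - t • α ∈ Φ := hbase.reflect_mem α hαΦ β hβΦ
  have key : ∀ c' : E → ℝ, (∑ δ ∈ Δ, c' δ • δ = 0) → ∀ δ ∈ Δ, c' δ = 0 := by
    intro c' hsum δ hδ
    have h0 : ∑ i : Δ, c' i • (i : E) = 0 := by
      rw [Finset.sum_coe_sort Δ (fun δ => c' δ • δ)]; exact hsum
    exact Fintype.linearIndependent_iff.mp hbase.indep (fun i => c' i) h0 ⟨δ, hδ⟩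
  have hita : ∑ δ ∈ Δ, (if δ = α then t else (0:ℝ)) • δ = t • α := by
    rw [Finset.sum_eq_single_of_mem α hα (fun b _ hb => by simp [hb])]
    simp
  have hitb : ∑ δ ∈ Δ, (if δ = β then (1:ℝ) else 0) • δ = β := by
    rw [Finset.sum_eq_single_of_mem β hβ (fun b _ hb => by simp [hb])]
    simp
  rcases hbase.pos_or_neg _ hγ with ⟨c, hc, hsum⟩ | ⟨c, hc, hsum⟩
  · have h0 : ∑ δ ∈ Δ, (c δ + (if δ = α then t else 0) - (if δ = β then 1 else 0)) • δ = 0 := by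
      simp only [sub_smul, add_smul, Finset.sum_sub_distrib, Finset.sum_add_distrib, hita, hitb]
      rw [← hsum]; abel
    have := key _ h0 α hα
    rw [if_pos rfl, if_neg hne] at this
    have := hc α hα
    linarith
  · have h0 : ∑ δ ∈ Δ, (c δ + (if δ = β then (1:ℝ) else 0) - (if δ = α then t else 0)) • δ = 0 := by
      simp only [sub_smul, add_smul, Finset.sum_sub_distrib, Finset.sum_add_distrib, hita, hitb]
      have : ∑ δ ∈ Δ, c δ • δ = -(β - t • α) := by rw [hsum, neg_neg]
      rw [this]; abel
    have := key _ h0 β hβ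
    rw [if_pos rfl, if_neg (Ne.symm hne)] at this
    have := hc β hβ
    linarith

lemma gram_posDef {E : Type*} [NormedAddCommGroup E] [InnerProductSpace ℝ E]
    (Δ : Finset E) (hind : LinearIndependent ℝ (fun α : Δ => (α : E))) :
    (Matrix.of fun α β : Δ => ⟪(α : E), (β : E)⟫).PosDef := by
  rw [Matrix.posDef_iff_dotProduct_mulVec]
  constructor
  · ext i j
    simp [Matrix.conjTranspose_apply, real_inner_comm]
  · intro x hx
    set v : E := ∑ i : Δ, x i • (i : E) with hvdef
    have hv : v ≠ 0 := by
      intro h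
      apply hx
      funext i
      exact Fintype.linearIndependent_iff.mp hind x h i
    have hcalc : dotProduct (star x)
        (Matrix.mulVec (Matrix.of fun α β : Δ => (inner ℝ (α : E) (β : E) : ℝ)) x)
        = ⟪v, v⟫ := by
      simp only [hvdef, dotProduct, Matrix.mulVec, Matrix.of_apply, star_trivial,
        sum_inner, inner_sum, real_inner_smul_left, real_inner_smul_right, Finset.mul_sum]
      exact Finset.sum_congr rfl fun i _ => Finset.sum_congr rfl fun k _ => by
        rw [real_inner_comm]; ring
    rw [hcalc]
    rw [real_inner_self_eq_norm_sq]
    exact pow_pos (norm_pos_iff.mpr hv) 2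


/-- For an irreducible root system, the inverse of the Gram matrix `((α,β))_{α,β∈Δ}`
of the simple roots has strictly positive entries. -/
theorem gram_matrix_inverse_entries_pos
    {E : Type*} [NormedAddCommGroup E] [InnerProductSpace ℝ E] [FiniteDimensional ℝ E]
    [DecidableEq E] (Φ : Set E) (Δ : Finset E) (hbase : IsRootSystemBase Φ Δ)
    (hirr : IsIrreducibleBase Δ) :
    ∀ α β : Δ, 0 < ((Matrix.of fun α β : Δ => ⟪(α : E), (β : E)⟫)⁻¹) α β := by
  classical
  intro i j
  set A : Matrix Δ Δ ℝ := Matrix.of fun α β : Δ => ⟪(α : E), (β : E)⟫ with hAdef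
  have hA : A.PosDef := gram_posDef Δ hbase.indep
  have hobtuse : ∀ a b : Δ, a ≠ b → A a b ≤ 0 := fun a b hab =>
    obtuse hbase a.2 b.2 (fun h => hab (Subtype.ext h))
  set x : Δ → ℝ := fun k => A⁻¹ k j with hxdef
  have hmul : A * A⁻¹ = 1 := Matrix.mul_nonsing_inv A ((Matrix.isUnit_iff_isUnit_det _).mp hA.isUnit)
  have h1 : ∀ i' : Δ, (A *ᵥ x) i' = if i' = j then 1 else 0 := by
    intro i'
    have h2 : (A *ᵥ x) i' = (A * A⁻¹) i' j := by
      simp [Matrix.mulVec, Matrix.mul_apply, dotProduct, hxdef]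
    rw [h2, hmul, Matrix.one_apply]
  -- Step 1: all entries of the column are nonnegative
  have hnonneg : ∀ k, 0 ≤ x k := by
    set vn : Δ → ℝ := fun k => max (-(x k)) 0 with hv
    set up : Δ → ℝ := fun k => max (x k) 0 with hu
    have hxuv : ∀ k, x k = up k - vn k := by
      intro k
      rcases le_total 0 (x k) with h | h
      · simp [hu, hv, max_eq_left h, max_eq_right (neg_nonpos.mpr h)]
      · simp [hu, hv, max_eq_right h, max_eq_left (neg_nonneg.mpr h)]
    have hvn0 : ∀ k, 0 ≤ vn k := fun k => le_max_right _ _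
    have hup0 : ∀ k, 0 ≤ up k := fun k => le_max_right _ _
    have hq : ∑ i', vn i' * (A *ᵥ x) i' = vn j := by
      simp only [h1, mul_ite, mul_one, mul_zero]
      simp
    have hsplit : ∑ i', vn i' * (A *ᵥ x) i'
        = (∑ i', ∑ k, vn i' * A i' k * up k) - (∑ i', ∑ k, vn i' * A i' k * vn k) := by
      rw [← Finset.sum_sub_distrib]
      refine Finset.sum_congr rfl fun i' _ => ?_
      rw [← Finset.sum_sub_distrib]
      simp only [Matrix.mulVec, dotProduct, Finset.mul_sum]
      refine Finset.sum_congr rfl fun k _ => ?_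
      rw [hxuv k]; ring
    have hPup : (∑ i', ∑ k, vn i' * A i' k * up k) ≤ 0 := by
      refine Finset.sum_nonpos fun i' _ => Finset.sum_nonpos fun k _ => ?_
      by_cases hik : i' = k
      · subst hik
        have : vn i' * up i' = 0 := by
          rcases le_total 0 (x i') with h | h
          · simp [hv, max_eq_right (neg_nonpos.mpr h)]
          · simp [hu, max_eq_right h]
        calc vn i' * A i' i' * up i' = A i' i' * (vn i' * up i') := by ring
        _ = 0 := by rw [this, mul_zero]
        _ ≤ 0 := le_refl 0
      · have h2 : vn i' * A i' k ≤ 0 := mul_nonpos_of_nonneg_of_nonpos (hvn0 i') (hobtuse i' k hik)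
        exact mul_nonpos_of_nonpos_of_nonneg h2 (hup0 k)
    have hQ : ∑ i', ∑ k, vn i' * A i' k * vn k ≤ 0 := by
      have h3 := hsplit.symm.trans hq
      have h4 := hvn0 j
      linarith
    have hQeq : dotProduct (star vn) (A *ᵥ vn) = ∑ i', ∑ k, vn i' * A i' k * vn k := by
      simp only [dotProduct, Matrix.mulVec, star_trivial, Finset.mul_sum]
      exact Finset.sum_congr rfl fun i' _ => Finset.sum_congr rfl fun k _ => by ring
    have hvn : vn = 0 := by
      by_contra hne
      have := hA.dotProduct_mulVec_pos hne
      rw [hQeq] at this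
      linarith
    intro k
    have h5 : vn k = 0 := congrFun hvn k
    have h6 : -(x k) ≤ max (-(x k)) 0 := le_max_left _ _
    rw [show max (-(x k)) (0:ℝ) = vn k from rfl, h5] at h6
    linarith
  -- Step 2: the diagonal entry is positive
  have hxj : 0 < x j := by
    have hAinv : A⁻¹.PosDef := hA.inv
    have hs : (Pi.single j 1 : Δ → ℝ) ≠ 0 := by
      intro h
      have := congrFun h j
      simp at this
    have h7 := hAinv.dotProduct_mulVec_pos hs
    have h8 : dotProduct (star (Pi.single j 1 : Δ → ℝ)) (A⁻¹ *ᵥ Pi.single j 1)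
        = A⁻¹ j j := by
      simp [Matrix.mulVec_single, dotProduct, Pi.single_apply]
    rw [h8] at h7
    exact h7
  -- Step 3: irreducibility forces the whole column positive
  set xE : E → ℝ := fun δ => if h : δ ∈ Δ then x ⟨δ, h⟩ else 0 with hxE
  set S : Finset E := Δ.filter (fun δ => 0 < xE δ) with hS
  have hSsub : S ⊆ Δ := Finset.filter_subset _ _
  have hjS : (j : E) ∈ S := by
    rw [hS, Finset.mem_filter]
    refine ⟨j.2, ?_⟩
    simp only [hxE]
    rw [dif_pos j.2]
    simpa using hxj
  have hSeq : S = Δ := by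
    by_contra hne
    obtain ⟨a, haS, b, hbm, hab⟩ := hirr S hSsub ⟨_, hjS⟩ hne
    rw [Finset.mem_sdiff] at hbm
    obtain ⟨hbΔ, hbnS⟩ := hbm
    have haΔ : a ∈ Δ := hSsub haS
    have hxa : 0 < x ⟨a, haΔ⟩ := by
      have h9 := (Finset.mem_filter.mp haS).2
      simpa only [hxE, dif_pos haΔ] using h9
    have hxb : x ⟨b, hbΔ⟩ = 0 := by
      have h10 : ¬ 0 < xE b := fun h => hbnS (Finset.mem_filter.mpr ⟨hbΔ, h⟩)
      simp only [hxE, dif_pos hbΔ] at h10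
      have h11 := hnonneg ⟨b, hbΔ⟩
      linarith
    have hbj : (⟨b, hbΔ⟩ : Δ) ≠ j := by
      intro h
      rw [h] at hxb
      linarith
    have h0 : (A *ᵥ x) ⟨b, hbΔ⟩ = 0 := by rw [h1, if_neg hbj]
    have hterms : ∀ k ∈ Finset.univ, A ⟨b, hbΔ⟩ k * x k ≤ 0 := by
      intro k _
      by_cases hk : (⟨b, hbΔ⟩ : Δ) = k
      · rw [← hk]
        simp [hxb]
      · exact mul_nonpos_of_nonpos_of_nonneg (hobtuse _ k hk) (hnonneg k)
    have hsum0 : ∑ k, A ⟨b, hbΔ⟩ k * x k = 0 := by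
      rw [show (∑ k, A ⟨b, hbΔ⟩ k * x k) = (A *ᵥ x) ⟨b, hbΔ⟩ from rfl, h0]
    have hall := (Finset.sum_eq_zero_iff_of_nonpos hterms).mp hsum0
    have h12 := hall ⟨a, haΔ⟩ (Finset.mem_univ _)
    have hAba : A ⟨b, hbΔ⟩ ⟨a, haΔ⟩ = 0 := by
      rcases mul_eq_zero.mp h12 with h | h
      · exact h
      · exact absurd h hxa.ne'
    apply hab
    rw [real_inner_comm]
    exact hAba
  have hiS : (i : E) ∈ S := by rw [hSeq]; exact i.2
  have h13 := (Finset.mem_filter.mp hiS).2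
  simp only [hxE, dif_pos i.2] at h13
  simpa using h13
end

section
/- Let Δ be a base of a root system spanning a Euclidean space with Weyl-invariant inner product, {w_α} the dual weights, d_α = Σ_{β}(w_α,w_β), and w̄_α = w_α/d_α the weighted dual weights. Let a ∈ E* be a linear functional such that w̄_α(a) ≥ w̄_β(a) for all β ∈ Δ and w̄_α(a) ≥ 0. Then α(a) ≥ w̄_α(a). (This is the case I = ∅ of the main appendix theorem.) -/
open Finset
open scoped RealInnerProductSpace

section Aux
set_option linter.unusedSectionVars false
variable {E : Type*} [NormedAddCommGroup E] [InnerProductSpace ℝ E]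
    [FiniteDimensional ℝ E] [DecidableEq E]

/-- pairing with dual weight extracts the coefficient -/
lemma dw_coeff (Δ : Finset E) (w : E → E)
    (hw : ∀ α ∈ Δ, ∀ β ∈ Δ, ⟪w α, β⟫ = if α = β then (1 : ℝ) else 0)
    (c : E → ℝ) {γ : E} (hγ : γ ∈ Δ) :
    ⟪w γ, ∑ β ∈ Δ, c β • β⟫ = c γ := by
  rw [inner_sum]
  simp only [real_inner_smul_right]
  rw [Finset.sum_eq_single γ]
  · rw [hw γ hγ γ hγ, if_pos rfl, mul_one]
  · intro b hb hbγ
    rw [hw γ hγ b hb, if_neg (Ne.symm hbγ), mul_zero]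
  · intro h; exact absurd hγ h

/-- every vector expands in the simple-root basis with dual-weight coefficients -/
lemma dw_expand (Δ : Finset E) (hspan : Submodule.span ℝ (Δ : Set E) = ⊤)
    (w : E → E) (hw : ∀ α ∈ Δ, ∀ β ∈ Δ, ⟪w α, β⟫ = if α = β then (1 : ℝ) else 0)
    (v : E) : v = ∑ γ ∈ Δ, ⟪w γ, v⟫ • γ := by
  have hv : v ∈ Submodule.span ℝ (Δ : Set E) := hspan ▸ Submodule.mem_top
  obtain ⟨c, -, hc⟩ := Submodule.mem_span_finset.1 hv
  rw [← hc]
  refine (Finset.sum_congr rfl fun γ hγ => ?_)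
  rw [dw_coeff Δ w hw c hγ]

/-- distinct simple roots have nonpositive inner product -/
lemma simple_obtuse (Φ : Set E) (Δ : Finset E) (hbase : IsRootSystemBase Φ Δ)
    (w : E → E) (hw : ∀ α ∈ Δ, ∀ β ∈ Δ, ⟪w α, β⟫ = if α = β then (1 : ℝ) else 0)
    {β γ : E} (hβ : β ∈ Δ) (hγ : γ ∈ Δ) (hne : β ≠ γ) : ⟪β, γ⟫ ≤ 0 := by
  by_contra h
  push_neg at h
  have hβΦ : β ∈ Φ := hbase.subset hβ
  have hγΦ : γ ∈ Φ := hbase.subset hγ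
  have hββ : (0:ℝ) < ⟪β, β⟫ := by
    refine lt_of_le_of_ne real_inner_self_nonneg (Ne.symm ?_)
    exact fun h => hbase.ne_zero β hβΦ (inner_self_eq_zero.1 h)
  set c : ℝ := 2 * ⟪β, γ⟫ / ⟪β, β⟫ with hc
  have hcpos : 0 < c := by positivity
  have hx : γ - c • β ∈ Φ := hbase.reflect_mem β hβΦ γ hγΦ
  have hwβ : ⟪w β, γ - c • β⟫ = -c := by
    rw [inner_sub_right, real_inner_smul_right, hw β hβ γ hγ, if_neg hne,
      hw β hβ β hβ, if_pos rfl]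
    ring
  have hwγ : ⟪w γ, γ - c • β⟫ = 1 := by
    rw [inner_sub_right, real_inner_smul_right, hw γ hγ γ hγ, if_pos rfl,
      hw γ hγ β hβ, if_neg (Ne.symm hne)]
    ring
  rcases hbase.pos_or_neg _ hx with ⟨e, he, hrep⟩ | ⟨e, he, hrep⟩
  · have h1 : ⟪w β, γ - c • β⟫ = e β := by rw [hrep, dw_coeff Δ w hw e hβ]
    have h2 := he β hβ
    rw [hwβ] at h1
    linarith
  · have h1 : ⟪w γ, γ - c • β⟫ = -(e γ) := by
      rw [hrep, inner_neg_right, dw_coeff Δ w hw e hγ]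
    have h2 := he γ hγ
    rw [hwγ] at h1
    linarith

/-- dual weights have pairwise nonnegative inner products -/
lemma dw_nonneg (Φ : Set E) (Δ : Finset E) (hbase : IsRootSystemBase Φ Δ)
    (w : E → E) (hw : ∀ α ∈ Δ, ∀ β ∈ Δ, ⟪w α, β⟫ = if α = β then (1 : ℝ) else 0)
    {β γ : E} (hβ : β ∈ Δ) (hγ : γ ∈ Δ) : 0 ≤ ⟪w β, w γ⟫ := by
  classical
  set c : E → ℝ := fun δ => ⟪w δ, w β⟫ with hcdef
  have hexp : w β = ∑ δ ∈ Δ, c δ • δ := dw_expand Δ hbase.span_top w hw (w β)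
  set N : Finset E := Δ.filter (fun δ => c δ < 0) with hN
  set n : E := ∑ δ ∈ N, (-(c δ)) • δ with hn
  have hNsub : N ⊆ Δ := Finset.filter_subset _ _
  have hβN : β ∉ N := by
    simp only [hN, Finset.mem_filter, not_and, not_lt]
    intro _
    exact real_inner_self_nonneg
  have hwβn : ⟪w β, n⟫ = 0 := by
    rw [hn, inner_sum]
    refine Finset.sum_eq_zero fun δ hδ => ?_
    rw [real_inner_smul_right, hw β hβ δ (hNsub hδ),
      if_neg (fun hbd => hβN (by rwa [hbd])), mul_zero]
  have hsplit : w β + n = ∑ δ ∈ Δ \ N, c δ • δ := by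
    rw [hexp, hn, ← Finset.sum_sdiff hNsub]
    simp only [neg_smul, Finset.sum_neg_distrib]
    abel
  have hpn : ⟪(∑ δ ∈ Δ \ N, c δ • δ : E), n⟫ ≤ 0 := by
    rw [sum_inner]
    refine Finset.sum_nonpos fun δ hδ => ?_
    rw [hn, real_inner_smul_left, inner_sum]
    simp only [real_inner_smul_right]
    have hδΔ : δ ∈ Δ := (Finset.mem_sdiff.1 hδ).1
    have hδN : δ ∉ N := (Finset.mem_sdiff.1 hδ).2
    have hcδ : 0 ≤ c δ := by
      by_contra hlt
      exact hδN (Finset.mem_filter.2 ⟨hδΔ, lt_of_not_ge hlt⟩)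
    refine mul_nonpos_of_nonneg_of_nonpos hcδ ?_
    refine Finset.sum_nonpos fun δ' hδ' => ?_
    have hδ'Δ : δ' ∈ Δ := hNsub hδ'
    have hcδ' : c δ' < 0 := (Finset.mem_filter.1 hδ').2
    have hne : δ ≠ δ' := fun hdd => hδN (hdd ▸ hδ')
    have := simple_obtuse Φ Δ hbase w hw hδΔ hδ'Δ hne
    nlinarith
  have hnn : ⟪n, n⟫ ≤ 0 := by
    have : ⟪w β + n, n⟫ ≤ 0 := hsplit ▸ hpn
    rw [inner_add_left, hwβn] at this
    linarith
  have hn0 : n = 0 := by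
    have := real_inner_self_nonneg (x := n)
    exact inner_self_eq_zero.1 (le_antisymm hnn this)
  -- now conclude γ ∉ N, i.e. 0 ≤ c γ
  have hγN : γ ∉ N := by
    intro hγN
    have h1 : ⟪n, w γ⟫ = -(c γ) := by
      rw [hn, sum_inner]
      rw [Finset.sum_eq_single γ]
      · rw [real_inner_smul_left, real_inner_comm, hw γ hγ γ hγ, if_pos rfl, mul_one]
      · intro b hb hbγ
        rw [real_inner_smul_left, real_inner_comm, hw γ hγ b (hNsub hb),
          if_neg (Ne.symm hbγ), mul_zero]
      · intro h; exact absurd hγN h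
    rw [hn0, inner_zero_left] at h1
    have : c γ < 0 := (Finset.mem_filter.1 hγN).2
    linarith
  have : ¬ c γ < 0 := fun hlt => hγN (Finset.mem_filter.2 ⟨hγ, hlt⟩)
  have : 0 ≤ c γ := not_lt.1 this
  rw [hcdef] at this
  calc (0:ℝ) ≤ ⟪w γ, w β⟫ := this
    _ = ⟪w β, w γ⟫ := real_inner_comm _ _

end Aux

/-- The case `I = ∅` of the appendix theorem: if `a ∈ E*` satisfies
`w̄_α(a) ≥ w̄_β(a)` for all `β ∈ Δ` and `w̄_α(a) ≥ 0`, then `α(a) ≥ w̄_α(a)`,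
where `w̄_γ = w_γ / d_γ` is the weighted dual weight. -/
theorem root_ge_weighted_dual_weight_of_max
    {E : Type*} [NormedAddCommGroup E] [InnerProductSpace ℝ E] [FiniteDimensional ℝ E]
    [DecidableEq E] (Φ : Set E) (Δ : Finset E) (hbase : IsRootSystemBase Φ Δ)
    (w : E → E) (hw : ∀ α ∈ Δ, ∀ β ∈ Δ, ⟪w α, β⟫ = if α = β then (1 : ℝ) else 0)
    (d : E → ℝ) (hd : ∀ γ ∈ Δ, d γ = ∑ β ∈ Δ, ⟪w γ, w β⟫)
    (α : E) (hα : α ∈ Δ) (a : Module.Dual ℝ E)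
    (hmax : ∀ β ∈ Δ, (d α)⁻¹ * a (w α) ≥ (d β)⁻¹ * a (w β))
    (hnonneg : (d α)⁻¹ * a (w α) ≥ 0) :
    a α ≥ (d α)⁻¹ * a (w α) := by
  classical
  -- positivity of the d's
  have hdpos : ∀ γ ∈ Δ, 0 < d γ := by
    intro γ hγ
    rw [hd γ hγ]
    refine Finset.sum_pos' (fun β hβ => dw_nonneg Φ Δ hbase w hw hγ hβ) ⟨γ, hγ, ?_⟩
    refine lt_of_le_of_ne real_inner_self_nonneg (Ne.symm ?_)
    intro h
    have h0 : w γ = 0 := inner_self_eq_zero.1 h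
    have h1 := hw γ hγ γ hγ
    rw [h0, if_pos rfl, inner_zero_left] at h1
    exact zero_ne_one h1
  -- expansion of α in the dual-weight basis
  have hαexp : α = ∑ β ∈ Δ, ⟪α, β⟫ • w β := by
    set y : E := (∑ β ∈ Δ, ⟪α, β⟫ • w β) - α with hy
    have hyγ : ∀ γ ∈ Δ, ⟪y, γ⟫ = 0 := by
      intro γ hγ
      rw [hy, inner_sub_left, sum_inner]
      simp only [real_inner_smul_left]
      rw [Finset.sum_eq_single γ]
      · rw [hw γ hγ γ hγ, if_pos rfl, mul_one, real_inner_comm γ α, sub_self]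
      · intro b hb hbγ
        rw [hw b hb γ hγ, if_neg hbγ, mul_zero]
      · intro h; exact absurd hγ h
    have hy0 : y = 0 := by
      have hexp := dw_expand Δ hbase.span_top w hw y
      have : ⟪y, y⟫ = 0 := by
        nth_rewrite 1 [hexp]
        rw [sum_inner]
        refine Finset.sum_eq_zero fun γ hγ => ?_
        have h2 : ⟪γ, y⟫ = 0 := (real_inner_comm y γ).trans (hyγ γ hγ)
        rw [real_inner_smul_left, h2, mul_zero]
      exact inner_self_eq_zero.1 this
    exact (sub_eq_zero.1 hy0).symm
  -- the key identity: ∑ β ⟪α,β⟫ d β = 1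
  have key : ∑ β ∈ Δ, ⟪α, β⟫ * d β = 1 := by
    have h1 : ∀ γ ∈ Δ, ⟪α, w γ⟫ = ∑ β ∈ Δ, ⟪α, β⟫ * ⟪w β, w γ⟫ := by
      intro γ hγ
      conv_lhs => rw [dw_expand Δ hbase.span_top w hw (w γ)]
      rw [inner_sum]
      refine Finset.sum_congr rfl fun β hβ => ?_
      rw [real_inner_smul_right]
      ring
    calc ∑ β ∈ Δ, ⟪α, β⟫ * d β
        = ∑ β ∈ Δ, ∑ γ ∈ Δ, ⟪α, β⟫ * ⟪w β, w γ⟫ := by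
          refine Finset.sum_congr rfl fun β hβ => ?_
          rw [hd β hβ, Finset.mul_sum]
      _ = ∑ γ ∈ Δ, ∑ β ∈ Δ, ⟪α, β⟫ * ⟪w β, w γ⟫ := Finset.sum_comm
      _ = ∑ γ ∈ Δ, ⟪α, w γ⟫ := by
          refine Finset.sum_congr rfl fun γ hγ => (h1 γ hγ).symm
      _ = 1 := by
          rw [Finset.sum_eq_single α]
          · rw [real_inner_comm, hw α hα α hα, if_pos rfl]
          · intro b hb hbα
            rw [real_inner_comm, hw b hb α hα, if_neg hbα]
          · intro h; exact absurd hα h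
  -- a applied to the expansion
  have haα : a α = ∑ β ∈ Δ, ⟪α, β⟫ * a (w β) := by
    conv_lhs => rw [hαexp]
    rw [map_sum]
    refine Finset.sum_congr rfl fun β hβ => ?_
    rw [map_smul, smul_eq_mul]
  set t : ℝ := (d α)⁻¹ * a (w α) with ht
  have hstep : ∀ β ∈ Δ, ⟪α, β⟫ * (d β * t) ≤ ⟪α, β⟫ * a (w β) := by
    intro β hβ
    have hdβ := hdpos β hβ
    have hrw : a (w β) = d β * ((d β)⁻¹ * a (w β)) := by
      field_simp
    rcases eq_or_ne α β with rfl | hne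
    · rw [hrw, ht]
    · have hobt : ⟪α, β⟫ ≤ 0 := simple_obtuse Φ Δ hbase w hw hα hβ hne
      have hle : (d β)⁻¹ * a (w β) ≤ t := hmax β hβ
      rw [hrw]
      have h3 : d β * ((d β)⁻¹ * a (w β)) ≤ d β * t :=
        mul_le_mul_of_nonneg_left hle hdβ.le
      exact mul_le_mul_of_nonpos_left h3 hobt
  calc a α = ∑ β ∈ Δ, ⟪α, β⟫ * a (w β) := haα
    _ ≥ ∑ β ∈ Δ, ⟪α, β⟫ * (d β * t) := Finset.sum_le_sum hstep
    _ = (∑ β ∈ Δ, ⟪α, β⟫ * d β) * t := by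
        rw [Finset.sum_mul]
        refine Finset.sum_congr rfl fun β hβ => by ring
    _ = t := by rw [key, one_mul]
end

section
/- Let Δ be a base of a root system spanning a Euclidean space with Weyl-invariant inner product, and let I ⊂ Δ. Then the set I ∪ {w_γ : γ ∈ Δ∖I} (simple roots in I together with the dual weights of the simple roots not in I) is a basis of E. Moreover, for every simple root α ∈ Δ, writing α = Σ_{β∈I} c_β·β + Σ_{γ∈Δ∖I} c_γ·w_γ in this basis, all coefficients c_δ with δ ≠ α are ≤ 0. -/
open Finset
open scoped RealInnerProductSpace

section Helpers
set_option linter.unusedSectionVars false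
variable {E : Type*} [NormedAddCommGroup E] [InnerProductSpace ℝ E] [FiniteDimensional ℝ E]
  [DecidableEq E] {Φ : Set E} {Δ : Finset E}

lemma my_inner_self_pos {x : E} (hx : x ≠ 0) : (0:ℝ) < ⟪x, x⟫ := by
  rcases lt_or_eq_of_le (real_inner_self_nonneg (x := x)) with h | h
  · exact h
  · exact absurd (inner_self_eq_zero.mp h.symm) hx

lemma coeffs_eq_zero (hbase : IsRootSystemBase Φ Δ) (g : E → ℝ)
    (h : ∑ β ∈ Δ, g β • β = 0) : ∀ β ∈ Δ, g β = 0 := by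
  have hli := linearIndependent_iff'.mp hbase.indep Finset.univ (fun β : Δ => g ↑β) ?_
  · intro β hβ; exact hli ⟨β, hβ⟩ (mem_univ _)
  · rw [Finset.univ_eq_attach, Finset.sum_attach Δ (fun x => g x • x)]
    exact h

lemma sub_not_mem (hbase : IsRootSystemBase Φ Δ) {α β : E} (hα : α ∈ Δ) (hβ : β ∈ Δ)
    (hne : α ≠ β) : α - β ∉ Φ := by
  intro hmem
  rcases hbase.pos_or_neg _ hmem with ⟨c, hc, hx⟩ | ⟨c, hc, hx⟩
  · have h0 : ∑ δ ∈ Δ, (c δ - (if δ = α then 1 else 0) + (if δ = β then 1 else 0)) • δ = 0 := by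
      simp only [add_smul, sub_smul, ite_smul, one_smul, zero_smul]
      rw [Finset.sum_add_distrib, Finset.sum_sub_distrib, Finset.sum_ite_eq' Δ α,
        Finset.sum_ite_eq' Δ β, if_pos hα, if_pos hβ, ← hx]
      abel
    have h1 := coeffs_eq_zero hbase _ h0 β hβ
    rw [if_neg (Ne.symm hne), if_pos rfl] at h1
    linarith [hc β hβ]
  · have hx' : ∑ δ ∈ Δ, c δ • δ = β - α := by
      rw [← neg_sub α β, hx, neg_neg]
    have h0 : ∑ δ ∈ Δ, (c δ - (if δ = β then 1 else 0) + (if δ = α then 1 else 0)) • δ = 0 := by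
      simp only [add_smul, sub_smul, ite_smul, one_smul, zero_smul]
      rw [Finset.sum_add_distrib, Finset.sum_sub_distrib, Finset.sum_ite_eq' Δ β,
        Finset.sum_ite_eq' Δ α, if_pos hα, if_pos hβ, hx']
      abel
    have h1 := coeffs_eq_zero hbase _ h0 α hα
    rw [if_neg hne, if_pos rfl] at h1
    linarith [hc α hα]

lemma inner_nonpos_of_base (hbase : IsRootSystemBase Φ Δ) {α β : E} (hα : α ∈ Δ) (hβ : β ∈ Δ)
    (hne : α ≠ β) : ⟪α, β⟫ ≤ 0 := by
  by_contra h
  push_neg at h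
  have hαΦ : α ∈ Φ := hbase.subset hα
  have hβΦ : β ∈ Φ := hbase.subset hβ
  have ha : (0:ℝ) < ⟪α, α⟫ := my_inner_self_pos (hbase.ne_zero α hαΦ)
  have hb : (0:ℝ) < ⟪β, β⟫ := my_inner_self_pos (hbase.ne_zero β hβΦ)
  obtain ⟨n, hn⟩ := hbase.crystallographic α hαΦ β hβΦ
  obtain ⟨m, hm⟩ := hbase.crystallographic β hβΦ α hαΦ
  rw [real_inner_comm α β] at hm
  have hn2 : 2 * ⟪α, β⟫ = (n : ℝ) * ⟪α, α⟫ := by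
    field_simp at hn; linarith [hn]
  have hm2 : 2 * ⟪α, β⟫ = (m : ℝ) * ⟪β, β⟫ := by
    field_simp at hm; linarith [hm]
  have hn1 : 1 ≤ n := by
    by_contra hc
    push_neg at hc
    have : (n:ℝ) ≤ 0 := by exact_mod_cast Int.lt_add_one_iff.mp (by omega)
    nlinarith
  have hm1 : 1 ≤ m := by
    by_contra hc
    push_neg at hc
    have : (m:ℝ) ≤ 0 := by exact_mod_cast Int.lt_add_one_iff.mp (by omega)
    nlinarith
  rcases eq_or_lt_of_le hn1 with h1 | h1
  · -- n = 1 : β - α ∈ Φ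
    have : β - α ∈ Φ := by
      have := hbase.reflect_mem α hαΦ β hβΦ
      rwa [hn, ← h1, Int.cast_one, one_smul] at this
    exact sub_not_mem hbase hβ hα (Ne.symm hne) this
  rcases eq_or_lt_of_le hm1 with h2 | h2
  · have : α - β ∈ Φ := by
      have := hbase.reflect_mem β hβΦ α hαΦ
      rwa [real_inner_comm α β, hm, ← h2, Int.cast_one, one_smul] at this
    exact sub_not_mem hbase hα hβ hne this
  · -- n ≥ 2, m ≥ 2
    have hn2' : (2:ℝ) ≤ (n:ℝ) := by exact_mod_cast h1
    have hm2' : (2:ℝ) ≤ (m:ℝ) := by exact_mod_cast h2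
    have hsub : (0:ℝ) < ⟪α - β, α - β⟫ :=
      my_inner_self_pos (sub_ne_zero.mpr hne)
    have hexp : ⟪α - β, α - β⟫ = ⟪α, α⟫ - 2 * ⟪α, β⟫ + ⟪β, β⟫ := by
      rw [inner_sub_sub_self, real_inner_comm α β]; ring
    nlinarith

lemma coeffs_nonpos (hbase : IsRootSystemBase Φ Δ) {I : Finset E} (hI : I ⊆ Δ) (c : E → ℝ)
    (h : ∀ β' ∈ I, ⟪∑ β ∈ I, c β • β, β'⟫ ≤ 0) : ∀ β ∈ I, c β ≤ 0 := by
  by_contra hcon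
  push_neg at hcon
  obtain ⟨β₀, hβ₀I, hβ₀⟩ := hcon
  set P : Finset E := I.filter (fun β => 0 < c β) with hPdef
  have hPI : P ⊆ I := Finset.filter_subset _ _
  set x : E := ∑ β ∈ I, c β • β with hxdef
  set y : E := ∑ β ∈ P, c β • β with hydef
  have hxy : x - y = ∑ β ∈ I \ P, c β • β := by
    rw [hxdef, hydef, ← Finset.sum_sdiff hPI]; abel
  have h1 : ⟪x, y⟫ ≤ 0 := by
    rw [hydef, inner_sum]
    apply Finset.sum_nonpos
    intro β hβ
    rw [real_inner_smul_right]
    obtain ⟨hβI, hβc⟩ := Finset.mem_filter.mp hβ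
    exact mul_nonpos_of_nonneg_of_nonpos (le_of_lt hβc) (h β hβI)
  have h2 : (0:ℝ) ≤ ⟪x - y, y⟫ := by
    rw [hxy, hydef, sum_inner]
    apply Finset.sum_nonneg
    intro β hβ
    rw [real_inner_smul_left, inner_sum]
    obtain ⟨hβI, hβc⟩ := Finset.mem_sdiff.mp hβ
    have hcβ : c β ≤ 0 := by
      by_contra hcc
      exact hβc (Finset.mem_filter.mpr ⟨hβI, lt_of_not_ge hcc⟩)
    have hs : ∑ β' ∈ P, ⟪β, c β' • β'⟫ ≤ 0 := by
      apply Finset.sum_nonpos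
      intro β' hβ'
      rw [real_inner_smul_right]
      obtain ⟨hβ'I, hβ'c⟩ := Finset.mem_filter.mp hβ'
      have hne : β ≠ β' := by rintro rfl; exact hβc hβ'
      exact mul_nonpos_of_nonneg_of_nonpos (le_of_lt hβ'c)
        (inner_nonpos_of_base hbase (hI hβI) (hI hβ'I) hne)
    nlinarith
  have hy0 : y = 0 := by
    apply real_inner_self_nonpos.mp
    have : ⟪y, y⟫ = ⟪x, y⟫ - ⟪x - y, y⟫ := by rw [inner_sub_left]; ring
    linarith
  have hzero := coeffs_eq_zero hbase (fun δ => if δ ∈ P then c δ else 0) ?_ β₀ (hI hβ₀I)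
  · have hβ₀P : β₀ ∈ P := Finset.mem_filter.mpr ⟨hβ₀I, hβ₀⟩
    have hzero' : (if β₀ ∈ P then c β₀ else 0) = 0 := hzero
    rw [if_pos hβ₀P] at hzero'
    linarith
  · show ∑ β ∈ Δ, (if β ∈ P then c β else 0) • β = 0
    rw [← hy0, hydef]
    rw [show ∑ β ∈ Δ, (if β ∈ P then c β else 0) • β
        = ∑ β ∈ Δ, (if β ∈ P then c β • β else 0) from
      Finset.sum_congr rfl (fun δ _ => by split <;> simp)]
    rw [Finset.sum_ite_mem, Finset.inter_eq_right.mpr (hPI.trans hI)]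

lemma coeffs_eq_zero_on (hbase : IsRootSystemBase Φ Δ) {I : Finset E} (hI : I ⊆ Δ) (g : E → ℝ)
    (h : ∑ β ∈ I, g β • β = 0) : ∀ β ∈ I, g β = 0 := by
  intro β hβ
  have h2 := coeffs_eq_zero hbase (fun δ => if δ ∈ I then g δ else 0) ?_ β (hI hβ)
  · have h3 : (if β ∈ I then g β else 0) = 0 := h2
    rwa [if_pos hβ] at h3
  · show ∑ δ ∈ Δ, (if δ ∈ I then g δ else 0) • δ = 0
    rw [show ∑ δ ∈ Δ, (if δ ∈ I then g δ else 0) • δ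
        = ∑ δ ∈ Δ, (if δ ∈ I then g δ • δ else 0) from
      Finset.sum_congr rfl (fun δ _ => by split <;> simp),
      Finset.sum_ite_mem, Finset.inter_eq_right.mpr hI, h]

end Helpers

/-- For `I ⊆ Δ`, the set `I ∪ {w_γ : γ ∈ Δ∖I}` is a basis of `E`, and in the expansion
`α = Σ_{β∈I} c_β·β + Σ_{γ∈Δ∖I} c_γ·w_γ` of a simple root `α`, every coefficient
`c_δ` with `δ ≠ α` is non-positive. -/
theorem roots_and_dual_weights_basis_and_sign
    {E : Type*} [NormedAddCommGroup E] [InnerProductSpace ℝ E] [FiniteDimensional ℝ E]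
    [DecidableEq E] (Φ : Set E) (Δ : Finset E) (hbase : IsRootSystemBase Φ Δ)
    (w : E → E) (hw : ∀ α ∈ Δ, ∀ β ∈ Δ, ⟪w α, β⟫ = if α = β then (1 : ℝ) else 0)
    (I : Finset E) (hI : I ⊆ Δ) :
    (∃ b : Module.Basis Δ ℝ E, ∀ β : Δ, b β = if (β : E) ∈ I then (β : E) else w β) ∧
    (∀ α ∈ Δ, ∀ c : E → ℝ,
      α = ∑ β ∈ I, c β • β + ∑ γ ∈ Δ \ I, c γ • w γ →
      ∀ δ ∈ Δ, δ ≠ α → c δ ≤ 0) := by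
  classical
  set V : E → E := fun δ => if δ ∈ I then δ else w δ with hV
  -- the key independence fact for the mixed family
  have key : ∀ G : E → ℝ, ∑ δ ∈ Δ, G δ • V δ = 0 → ∀ δ ∈ Δ, G δ = 0 := by
    intro G hG
    have hx1 : ∑ δ ∈ I, G δ • V δ = ∑ δ ∈ I, G δ • δ :=
      Finset.sum_congr rfl (fun δ hδ => by rw [hV]; simp [hδ])
    have hz1 : ∑ δ ∈ Δ \ I, G δ • V δ = ∑ δ ∈ Δ \ I, G δ • w δ :=
      Finset.sum_congr rfl (fun δ hδ => by rw [hV]; simp [(Finset.mem_sdiff.mp hδ).2])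
    have hsplit : ∑ δ ∈ I, G δ • δ + ∑ δ ∈ Δ \ I, G δ • w δ = 0 := by
      rw [← hx1, ← hz1, add_comm, Finset.sum_sdiff hI]; exact hG
    have hzere : ∀ β' ∈ I, ⟪∑ δ ∈ Δ \ I, G δ • w δ, β'⟫ = (0:ℝ) := by
      intro β' hβ'
      rw [sum_inner]
      apply Finset.sum_eq_zero
      intro γ hγ
      obtain ⟨hγΔ, hγI⟩ := Finset.mem_sdiff.mp hγ
      rw [real_inner_smul_left, hw γ hγΔ β' (hI hβ'),
        if_neg (by rintro rfl; exact hγI hβ'), mul_zero]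
    have hxinner : ∀ β' ∈ I, ⟪∑ δ ∈ I, G δ • δ, β'⟫ = (0:ℝ) := by
      intro β' hβ'
      have h0 : ⟪∑ δ ∈ I, G δ • δ + ∑ δ ∈ Δ \ I, G δ • w δ, β'⟫ = (0:ℝ) := by
        rw [hsplit, inner_zero_left]
      rw [inner_add_left, hzere β' hβ'] at h0
      linarith
    have hx0 : (∑ δ ∈ I, G δ • δ) = 0 := by
      rw [← inner_self_eq_zero (𝕜 := ℝ)]
      rw [inner_sum]
      apply Finset.sum_eq_zero
      intro β' hβ'
      rw [real_inner_smul_right, hxinner β' hβ', mul_zero]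
    have hGI : ∀ δ ∈ I, G δ = 0 := coeffs_eq_zero_on hbase hI G hx0
    have hz0 : ∑ δ ∈ Δ \ I, G δ • w δ = 0 := by
      rw [hx0, zero_add] at hsplit; exact hsplit
    have hGJ : ∀ γ ∈ Δ \ I, G γ = 0 := by
      intro γ hγ
      obtain ⟨hγΔ, hγI⟩ := Finset.mem_sdiff.mp hγ
      have h0 : ⟪∑ δ ∈ Δ \ I, G δ • w δ, γ⟫ = (0:ℝ) := by rw [hz0, inner_zero_left]
      rw [sum_inner, Finset.sum_congr rfl (fun δ hδ => show ⟪G δ • w δ, γ⟫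
          = if δ = γ then G δ else 0 by
        rw [real_inner_smul_left, hw δ (Finset.mem_sdiff.mp hδ).1 γ hγΔ]
        split <;> simp), Finset.sum_ite_eq' (Δ \ I) γ, if_pos hγ] at h0
      exact h0
    intro δ hδ
    by_cases hδI : δ ∈ I
    · exact hGI δ hδI
    · exact hGJ δ (Finset.mem_sdiff.mpr ⟨hδ, hδI⟩)
  constructor
  · -- the basis
    have b0 : Module.Basis Δ ℝ E := Module.Basis.mk hbase.indep (by
      rw [Subtype.range_coe_subtype]
      rw [show ({x | x ∈ Δ} : Set E) = (Δ : Set E) from rfl, hbase.span_top])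
    have hcard : Fintype.card Δ = Module.finrank ℝ E := (Module.finrank_eq_card_basis b0).symm
    rcases isEmpty_or_nonempty Δ with hemp | hne
    · have hsub : Subsingleton E := by
        rw [← Module.finrank_zero_iff (R := ℝ)]
        rw [← hcard, Fintype.card_eq_zero]
      exact ⟨Module.Basis.empty E, fun β => (hemp.false β).elim⟩
    have hv : LinearIndependent ℝ (fun i : Δ => V ↑i) := by
      rw [Fintype.linearIndependent_iff]
      intro g hg i
      set G : E → ℝ := fun δ => if h : δ ∈ Δ then g ⟨δ, h⟩ else 0 with hGdef
      have hcoe : ∀ j : Δ, G ↑j = g j := fun j => by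
        rw [hGdef]; simp [j.2]
      have hsum : ∑ δ ∈ Δ, G δ • V δ = 0 := by
        calc ∑ δ ∈ Δ, G δ • V δ = ∑ j ∈ Δ.attach, G ↑j • V ↑j :=
              (Finset.sum_attach Δ (fun δ => G δ • V δ)).symm
          _ = ∑ j ∈ Δ.attach, g j • V ↑j := Finset.sum_congr rfl (fun j _ => by rw [hcoe])
          _ = ∑ j : Δ, g j • V ↑j := by rw [Finset.univ_eq_attach]
          _ = 0 := hg
      have := key G hsum ↑i i.2
      rwa [hcoe] at this
    refine ⟨basisOfLinearIndependentOfCardEqFinrank hv hcard, fun β => ?_⟩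
    rw [coe_basisOfLinearIndependentOfCardEqFinrank]
  · -- the sign condition
    intro α hαΔ c heq δ hδΔ hδα
    by_cases hαI : α ∈ I
    · -- α ∈ I : all other coefficients vanish
      have hsum : ∑ t ∈ Δ, (c t - if t = α then 1 else 0) • V t = 0 := by
        simp only [sub_smul, ite_smul, one_smul, zero_smul]
        rw [Finset.sum_sub_distrib, Finset.sum_ite_eq' Δ α, if_pos hαΔ]
        have hVα : V α = α := by rw [hV]; simp [hαI]
        have hs : ∑ t ∈ Δ, c t • V t = ∑ t ∈ I, c t • t + ∑ t ∈ Δ \ I, c t • w t := by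
          rw [← Finset.sum_sdiff hI (f := fun t => c t • V t), add_comm]
          congr 1
          · exact Finset.sum_congr rfl fun t ht => by rw [hV]; simp [ht]
          · exact Finset.sum_congr rfl fun t ht => by
              rw [hV]; simp [(Finset.mem_sdiff.mp ht).2]
        rw [hVα, hs, ← heq, sub_self]
      have h0 := key _ hsum δ hδΔ
      rw [if_neg hδα, sub_zero] at h0
      exact le_of_eq h0
    · -- α ∉ I
      have hinner : ∀ β' ∈ I, ⟪∑ β ∈ I, c β • β, β'⟫ ≤ (0:ℝ) := by
        intro β' hβ'
        have hαβ' : ⟪α, β'⟫ ≤ (0:ℝ) :=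
          inner_nonpos_of_base hbase hαΔ (hI hβ') (by rintro rfl; exact hαI hβ')
        have h0 : ⟪α, β'⟫ = ⟪∑ β ∈ I, c β • β, β'⟫ + ∑ γ ∈ Δ \ I, ⟪c γ • w γ, β'⟫ := by
          conv_lhs => rw [heq]
          rw [inner_add_left, sum_inner, sum_inner]
        have hz : ∑ γ ∈ Δ \ I, ⟪c γ • w γ, β'⟫ = (0:ℝ) := by
          apply Finset.sum_eq_zero
          intro γ hγ
          obtain ⟨hγΔ, hγI⟩ := Finset.mem_sdiff.mp hγ
          rw [real_inner_smul_left, hw γ hγΔ β' (hI hβ'),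
            if_neg (by rintro rfl; exact hγI hβ'), mul_zero]
        rw [hz, add_zero] at h0
        linarith
      have hcI := coeffs_nonpos hbase hI c hinner
      by_cases hδI : δ ∈ I
      · exact hcI δ hδI
      · have hδmem : δ ∈ Δ \ I := Finset.mem_sdiff.mpr ⟨hδΔ, hδI⟩
        have h0 : ⟪α, δ⟫ = (∑ β ∈ I, c β * ⟪β, δ⟫) + c δ := by
          conv_lhs => rw [heq]
          rw [inner_add_left]
          congr 1
          · rw [sum_inner]
            exact Finset.sum_congr rfl fun β _ => by rw [real_inner_smul_left]
          · rw [sum_inner, Finset.sum_congr rfl (fun γ hγ => show ⟪c γ • w γ, δ⟫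
                = if γ = δ then c γ else 0 by
              rw [real_inner_smul_left, hw γ (Finset.mem_sdiff.mp hγ).1 δ hδΔ]
              split <;> simp), Finset.sum_ite_eq' (Δ \ I) δ, if_pos hδmem]
        have hαδ : ⟪α, δ⟫ ≤ (0:ℝ) := inner_nonpos_of_base hbase hαΔ hδΔ (Ne.symm hδα)
        have hterms : (0:ℝ) ≤ ∑ β ∈ I, c β * ⟪β, δ⟫ := by
          apply Finset.sum_nonneg
          intro β hβ
          have h1 := hcI β hβ
          have h2 : ⟪β, δ⟫ ≤ (0:ℝ) :=
            inner_nonpos_of_base hbase (hI hβ) hδΔ (by rintro rfl; exact hδI hβ)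
          nlinarith
        linarith
end

section
/- Let Δ be a base of a root system spanning a Euclidean space with Weyl-invariant inner product, let α ∈ Δ and I ⊂ Δ∖{α}. Set 𝔞_I = {a ∈ E* : β(a) = 0 for all β ∈ I}. For every a ∈ 𝔞_I satisfying w̄_α(a) ≥ w̄_γ(a) for all γ ∈ Δ∖I and w̄_α(a) ≥ 0, the estimate α(a) ≥ w̄_α(a) holds. -/
open Finset
open scoped RealInnerProductSpace

section Aux

variable {E : Type*} [NormedAddCommGroup E] [InnerProductSpace ℝ E] [FiniteDimensional ℝ E]
  [DecidableEq E]

private lemma real_inner_self_pos' {x : E} (h : x ≠ 0) : (0:ℝ) < ⟪x, x⟫ := by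
  rcases lt_or_eq_of_le (real_inner_self_nonneg (x := x)) with h' | h'
  · exact h'
  · exact absurd (real_inner_self_nonpos.mp (le_of_eq h'.symm)) h

/-- Pairing a dual weight with a linear combination of simple roots extracts the coefficient. -/
private lemma pairW {Δ : Finset E} {w : E → E}
    (hw : ∀ α ∈ Δ, ∀ β ∈ Δ, ⟪w α, β⟫ = if α = β then (1 : ℝ) else 0)
    {γ : E} (hγ : γ ∈ Δ) (c : E → ℝ) :
    ⟪w γ, ∑ β ∈ Δ, c β • β⟫ = c γ := by
  have h : ∀ δ ∈ Δ, ⟪w γ, c δ • δ⟫ = if γ = δ then c δ else 0 := by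
    intro δ hδ
    rw [real_inner_smul_right, hw γ hγ δ hδ]
    split <;> ring
  rw [inner_sum, Finset.sum_congr rfl h, Finset.sum_ite_eq Δ γ c, if_pos hγ]

/-- Distinct simple roots have nonpositive inner product. -/
private lemma lemA {Φ : Set E} {Δ : Finset E} (hbase : IsRootSystemBase Φ Δ)
    {w : E → E} (hw : ∀ α ∈ Δ, ∀ β ∈ Δ, ⟪w α, β⟫ = if α = β then (1 : ℝ) else 0)
    {β γ : E} (hβ : β ∈ Δ) (hγ : γ ∈ Δ) (hne : β ≠ γ) : ⟪β, γ⟫ ≤ 0 := by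
  by_contra hpos
  push_neg at hpos
  have hβΦ := hbase.subset hβ
  have hγΦ := hbase.subset hγ
  have hγγ : (0:ℝ) < ⟪γ, γ⟫ := real_inner_self_pos' (hbase.ne_zero γ hγΦ)
  have hk : (0:ℝ) < 2 * ⟪γ, β⟫ / ⟪γ, γ⟫ := by
    apply div_pos _ hγγ
    rw [real_inner_comm]; linarith
  have hr := hbase.reflect_mem γ hγΦ β hβΦ
  rcases hbase.pos_or_neg _ hr with ⟨c, hc, hrep⟩ | ⟨c, hc, hrep⟩
  · have h1 : ⟪w γ, β - (2 * ⟪γ, β⟫ / ⟪γ, γ⟫) • γ⟫ = -(2 * ⟪γ, β⟫ / ⟪γ, γ⟫) := by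
      rw [inner_sub_right, real_inner_smul_right, hw γ hγ β hβ, hw γ hγ γ hγ,
        if_neg (Ne.symm hne), if_pos rfl]
      ring
    rw [hrep, pairW hw hγ c] at h1
    have := hc γ hγ
    linarith
  · have h1 : ⟪w β, β - (2 * ⟪γ, β⟫ / ⟪γ, γ⟫) • γ⟫ = 1 := by
      rw [inner_sub_right, real_inner_smul_right, hw β hβ β hβ, hw β hβ γ hγ,
        if_pos rfl, if_neg hne]
      ring
    rw [hrep, inner_neg_right, pairW hw hβ c] at h1
    have := hc β hβ
    linarith

/-- A vector in the span of a subset of simple roots having nonnegative inner product with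
each of them is a nonnegative combination of them. -/
private lemma lemB {Δ : Finset E}
    (hA : ∀ β ∈ Δ, ∀ γ ∈ Δ, β ≠ γ → ⟪β, γ⟫ ≤ (0:ℝ))
    {S : Finset E} (hS : S ⊆ Δ) {v : E} (hv : v ∈ Submodule.span ℝ (S : Set E))
    (hpos : ∀ γ ∈ S, (0:ℝ) ≤ ⟪v, γ⟫) :
    ∃ c : E → ℝ, (∀ β ∈ S, 0 ≤ c β) ∧ v = ∑ β ∈ S, c β • β := by
  classical
  obtain ⟨c, -, hc⟩ := Submodule.mem_span_finset.mp hv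
  set Sp := S.filter (fun β => 0 ≤ c β) with hSp
  set Sm := S.filter (fun β => ¬ 0 ≤ c β) with hSm
  set vp : E := ∑ β ∈ Sp, c β • β with hvp
  set vm : E := ∑ β ∈ Sm, (-c β) • β with hvm
  have hsplit : v = vp - vm := by
    have h : vp - vm = ∑ β ∈ Sp, c β • β + ∑ β ∈ Sm, c β • β := by
      rw [hvp, hvm, sub_eq_add_neg, ← Finset.sum_neg_distrib]
      congr 1
      exact Finset.sum_congr rfl fun x _ => by rw [neg_smul, neg_neg]
    rw [h, hSp, hSm, Finset.sum_filter_add_sum_filter_not, hc]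
  have h1 : ⟪vp, vm⟫ ≤ 0 := by
    rw [hvp, sum_inner]
    apply Finset.sum_nonpos
    intro i hi
    rw [real_inner_smul_left, hvm, inner_sum]
    apply mul_nonpos_iff.mpr
    left
    constructor
    · exact (Finset.mem_filter.mp hi).2
    · apply Finset.sum_nonpos
      intro j hj
      rw [real_inner_smul_right]
      apply mul_nonpos_iff.mpr
      left
      constructor
      · have := (Finset.mem_filter.mp hj).2; push_neg at this; linarith
      · apply hA i (hS (Finset.mem_filter.mp hi).1) j (hS (Finset.mem_filter.mp hj).1)
        intro hij
        exact (Finset.mem_filter.mp hj).2 (hij ▸ (Finset.mem_filter.mp hi).2)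
  have h2 : 0 ≤ ⟪v, vm⟫ := by
    rw [hvm, inner_sum]
    apply Finset.sum_nonneg
    intro j hj
    rw [real_inner_smul_right]
    apply mul_nonneg
    · have := (Finset.mem_filter.mp hj).2; push_neg at this; linarith
    · exact hpos j (Finset.mem_filter.mp hj).1
  have hvm0 : vm = 0 := by
    have : ⟪vm, vm⟫ ≤ 0 := by
      have : ⟪vm, vm⟫ = ⟪vp, vm⟫ - ⟪v, vm⟫ := by rw [hsplit, inner_sub_left]; ring
      linarith
    exact real_inner_self_nonpos.mp this
  refine ⟨fun β => if 0 ≤ c β then c β else 0, fun β _ => ?_, ?_⟩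
  · dsimp only; split
    · assumption
    · exact le_refl 0
  have : ∑ β ∈ S, (if 0 ≤ c β then c β else 0) • β = vp := by
    rw [hvp, Finset.sum_filter]
    apply Finset.sum_congr rfl
    intro β _
    split <;> simp
  rw [this, hsplit, hvm0, sub_zero]

end Aux

/-- Theorem of the appendix (Li): for `α ∈ Δ` and `I ⊆ Δ∖{α}`, every
`a ∈ 𝔞_I = ∩_{β∈I} ker β ⊆ E*` satisfying `w̄_α(a) ≥ w̄_γ(a)` for all `γ ∈ Δ∖I` and
`w̄_α(a) ≥ 0` also satisfies `α(a) ≥ w̄_α(a)`. -/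
theorem root_ge_weighted_dual_weight_on_aI
    {E : Type*} [NormedAddCommGroup E] [InnerProductSpace ℝ E] [FiniteDimensional ℝ E]
    [DecidableEq E] (Φ : Set E) (Δ : Finset E) (hbase : IsRootSystemBase Φ Δ)
    (w : E → E) (hw : ∀ α ∈ Δ, ∀ β ∈ Δ, ⟪w α, β⟫ = if α = β then (1 : ℝ) else 0)
    (d : E → ℝ) (hd : ∀ γ ∈ Δ, d γ = ∑ β ∈ Δ, ⟪w γ, w β⟫)
    (α : E) (hα : α ∈ Δ) (I : Finset E) (hI : I ⊆ Δ.erase α)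
    (a : Module.Dual ℝ E) (ha : ∀ β ∈ I, a β = 0)
    (hmax : ∀ γ ∈ Δ \ I, (d α)⁻¹ * a (w α) ≥ (d γ)⁻¹ * a (w γ))
    (hnonneg : (d α)⁻¹ * a (w α) ≥ 0) :
    a α ≥ (d α)⁻¹ * a (w α) := by
  classical
  have hA : ∀ β ∈ Δ, ∀ γ ∈ Δ, β ≠ γ → ⟪β, γ⟫ ≤ (0:ℝ) := fun β hβ γ hγ h => lemA hbase hw hβ hγ h
  have hαI : α ∉ I := fun h => (Finset.mem_erase.mp (hI h)).1 rfl
  have hIΔ : I ⊆ Δ := hI.trans (Finset.erase_subset α Δ)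
  -- orthogonality of x with all simple roots forces x = 0
  have hzero : ∀ x : E, (∀ δ ∈ Δ, ⟪x, δ⟫ = 0) → x = 0 := by
    intro x hx
    have hxmem : x ∈ Submodule.span ℝ (Δ : Set E) := by rw [hbase.span_top]; trivial
    obtain ⟨c, -, hc⟩ := Submodule.mem_span_finset.mp hxmem
    rw [← @inner_self_eq_zero ℝ, ← hc, inner_sum]
    apply Finset.sum_eq_zero
    intro δ hδ
    rw [real_inner_smul_right]
    have : ⟪x, δ⟫ = 0 := hx δ hδ
    rw [show ⟪(∑ i ∈ Δ, c i • i : E), δ⟫ = (0:ℝ) from hc ▸ this]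
    ring
  -- expansion in the dual weight "basis"
  have hexp : ∀ v : E, ∑ γ ∈ Δ, ⟪v, γ⟫ • w γ = v := by
    intro v
    have hkey : ∀ δ ∈ Δ, ⟪v - ∑ γ ∈ Δ, ⟪v, γ⟫ • w γ, δ⟫ = 0 := by
      intro δ hδ
      rw [inner_sub_left, sum_inner]
      have h : ∀ γ ∈ Δ, ⟪(⟪v, γ⟫ : ℝ) • w γ, δ⟫ = if γ = δ then ⟪v, δ⟫ else 0 := by
        intro γ hγ
        rw [real_inner_smul_left, hw γ hγ δ hδ]
        split
        · next h => rw [h]; ring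
        · ring
      rw [Finset.sum_congr rfl h, Finset.sum_ite_eq' Δ δ, if_pos hδ, sub_self]
    exact (sub_eq_zero.mp (hzero _ hkey)).symm
  -- nonnegativity of inner products of dual weights, positivity of d
  have hwnn : ∀ β ∈ Δ, ∀ γ ∈ Δ, (0:ℝ) ≤ ⟪w β, w γ⟫ := by
    intro β hβ γ hγ
    have hv : w γ ∈ Submodule.span ℝ (Δ : Set E) := by rw [hbase.span_top]; trivial
    have hpos : ∀ δ ∈ Δ, (0:ℝ) ≤ ⟪w γ, δ⟫ := fun δ hδ => by
      rw [hw γ hγ δ hδ]; split <;> norm_num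
    obtain ⟨c, hc0, hcrep⟩ := lemB hA (Finset.Subset.refl Δ) hv hpos
    rw [hcrep, pairW hw hβ c]
    exact hc0 β hβ
  have hdpos : ∀ γ ∈ Δ, 0 < d γ := by
    intro γ hγ
    rw [hd γ hγ]
    apply Finset.sum_pos' (fun β hβ => hwnn γ hγ β hβ)
    refine ⟨γ, hγ, ?_⟩
    apply real_inner_self_pos'
    intro h0
    have h1 := hw γ hγ γ hγ
    rw [h0, if_pos rfl] at h1
    simp at h1
  -- orthogonal projection onto the span of I
  set K := Submodule.span ℝ (I : Set E) with hK
  set u : E := α - (K.orthogonalProjectionOnto α : E) with hu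
  have huK : u ∈ Kᗮ := Submodule.sub_starProjection_mem_orthogonal (K := K) α
  have huγ : ∀ γ ∈ I, ⟪u, γ⟫ = 0 := by
    intro γ hγ
    rw [real_inner_comm]
    exact (Submodule.mem_orthogonal K u).mp huK γ (Submodule.subset_span hγ)
  have hpK : u - α ∈ K := by
    have hm : (K.orthogonalProjectionOnto α : E) ∈ K := SetLike.coe_mem _
    have heq : u - α = -(K.orthogonalProjectionOnto α : E) := by rw [hu]; abel
    rw [heq]; exact K.neg_mem hm
  have hpinner : ∀ γ ∈ I, (0:ℝ) ≤ ⟪u - α, γ⟫ := by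
    intro γ hγ
    rw [inner_sub_left, huγ γ hγ]
    have hne : α ≠ γ := fun h => hαI (h ▸ hγ)
    have := hA α hα γ (hIΔ hγ) hne
    linarith
  obtain ⟨κ, hκ0, hκrep⟩ := lemB hA hIΔ hpK hpinner
  have hurep : u = α + ∑ β ∈ I, κ β • β := by rw [← hκrep]; abel
  -- inner products of u with dual weights
  have huw : ∀ δ ∈ Δ, ⟪u, w δ⟫ = (if δ = α then (1:ℝ) else 0) + (if δ ∈ I then κ δ else 0) := by
    intro δ hδ
    rw [hurep, inner_add_left, sum_inner]
    congr 1
    · rw [real_inner_comm, hw δ hδ α hα]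
    · have h : ∀ β ∈ I, ⟪κ β • β, w δ⟫ = if δ = β then κ β else 0 := by
        intro β hβ
        rw [real_inner_smul_left, real_inner_comm, hw δ hδ β (hIΔ hβ)]
        split <;> ring
      rw [Finset.sum_congr rfl h, Finset.sum_ite_eq I δ κ]
  -- sign of ⟪u, γ⟫ for γ outside I ∪ {α}
  have huγle : ∀ γ ∈ Δ, γ ∉ I → γ ≠ α → ⟪u, γ⟫ ≤ 0 := by
    intro γ hγ hγI hγα
    rw [hurep, inner_add_left, sum_inner]
    have h1 : ⟪α, γ⟫ ≤ 0 := hA α hα γ hγ (Ne.symm hγα)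
    have h2 : ∑ β ∈ I, ⟪κ β • β, γ⟫ ≤ 0 := by
      apply Finset.sum_nonpos
      intro β hβ
      rw [real_inner_smul_left]
      exact mul_nonpos_iff.mpr (Or.inl ⟨hκ0 β hβ, hA β (hIΔ hβ) γ hγ (fun h => hγI (h ▸ hβ))⟩)
    linarith
  -- expansion of a α
  have haα : a α = ∑ γ ∈ Δ, ⟪u, γ⟫ * a (w γ) := by
    have h1 : a α = a u := by
      rw [hurep, map_add, map_sum]
      have h : ∀ β ∈ I, a (κ β • β) = 0 := by
        intro β hβ
        rw [map_smul, ha β hβ, smul_zero]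
      rw [Finset.sum_eq_zero h, add_zero]
    rw [h1]
    conv_lhs => rw [← hexp u]
    rw [map_sum]
    exact Finset.sum_congr rfl fun γ _ => by rw [map_smul]; rfl
  -- the total weight is at least 1
  have hesum : (1:ℝ) ≤ ∑ γ ∈ Δ, ⟪u, γ⟫ * d γ := by
    have h1 : ∑ γ ∈ Δ, ⟪u, γ⟫ * d γ = ∑ β ∈ Δ, ⟪u, w β⟫ := by
      have h2 : ∀ γ ∈ Δ, ⟪u, γ⟫ * d γ = ∑ β ∈ Δ, ⟪(⟪u, γ⟫ : ℝ) • w γ, w β⟫ := by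
        intro γ hγ
        rw [hd γ hγ, Finset.mul_sum]
        exact Finset.sum_congr rfl fun β _ => (real_inner_smul_left _ _ _).symm
      rw [Finset.sum_congr rfl h2, Finset.sum_comm]
      refine Finset.sum_congr rfl fun β _ => ?_
      rw [← sum_inner, hexp u]
    rw [h1]
    have h3 : ∀ β ∈ Δ, (if β = α then (1:ℝ) else 0) ≤ ⟪u, w β⟫ := by
      intro β hβ
      rw [huw β hβ]
      by_cases h : β = α
      · subst h; simp [hαI]
      · by_cases h' : β ∈ I
        · have := hκ0 β h'; simp [h, h']; linarith
        · simp [h, h']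
    calc (1:ℝ) = ∑ β ∈ Δ, (if β = α then (1:ℝ) else 0) := by
          rw [Finset.sum_ite_eq' Δ α, if_pos hα]
      _ ≤ ∑ β ∈ Δ, ⟪u, w β⟫ := Finset.sum_le_sum h3
  -- termwise comparison and conclusion
  set M := (d α)⁻¹ * a (w α) with hM
  have hterm : ∀ γ ∈ Δ, (⟪u, γ⟫ * d γ) * M ≤ ⟪u, γ⟫ * a (w γ) := by
    intro γ hγ
    have hdγ : 0 < d γ := hdpos γ hγ
    have key : ⟪u, γ⟫ * a (w γ) = (⟪u, γ⟫ * d γ) * ((d γ)⁻¹ * a (w γ)) := by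
      field_simp
    by_cases hγI : γ ∈ I
    · rw [huγ γ hγI]; simp
    · by_cases hγα : γ = α
      · subst hγα; rw [key]
      · rw [key]
        have he : ⟪u, γ⟫ * d γ ≤ 0 :=
          mul_nonpos_iff.mpr (Or.inr ⟨huγle γ hγ hγI hγα, le_of_lt hdγ⟩)
        have hm := hmax γ (Finset.mem_sdiff.mpr ⟨hγ, hγI⟩)
        exact mul_le_mul_of_nonpos_left hm he
  have hfin : (∑ γ ∈ Δ, ⟪u, γ⟫ * d γ) * M ≤ a α := by
    rw [haα, Finset.sum_mul]
    exact Finset.sum_le_sum hterm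
  have : M ≤ (∑ γ ∈ Δ, ⟪u, γ⟫ * d γ) * M := by
    nlinarith [hesum, hnonneg]
  linarith
end

section
/- Let Δ be a base of a root system spanning a Euclidean space with Weyl-invariant inner product, let α ∈ Δ and I ⊂ Δ∖{α} be such that (w_α, w_β) > 0 for at least one β ∈ Δ∖(I∪{α}). Suppose (a_n) is a sequence in 𝔞_I = ∩_{β∈I} ker β ⊂ E* with β(a_n) → ∞ for all β ∈ Δ∖(I∪{α}), w̄_α(a_n) ≥ w̄_β(a_n) for all β ∈ Δ∖I, and w̄_α(a_n) ≥ 0 for all n. Then α(a_n) → ∞. -/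
open Finset
open scoped RealInnerProductSpace

set_option linter.unusedSectionVars false
set_option maxHeartbeats 1000000

section Aux
variable {E : Type*} [NormedAddCommGroup E] [InnerProductSpace ℝ E] [FiniteDimensional ℝ E]
  [DecidableEq E]

lemma aux_inner_self_pos {x : E} (hx : x ≠ 0) : 0 < ⟪x, x⟫ := by
  rw [real_inner_self_eq_norm_mul_norm]
  have := norm_pos_iff.mpr hx
  positivity

/-- Coefficients of a vanishing combination of base elements vanish. -/
lemma aux_indep {Δ : Finset E}
    (indep : LinearIndependent ℝ (fun α : Δ => (α : E)))
    (g : E → ℝ) (hg : ∑ δ ∈ Δ, g δ • δ = 0) : ∀ δ ∈ Δ, g δ = 0 := by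
  have h0 : ∑ i ∈ (Finset.univ : Finset Δ), g ↑i • (↑i : E) = 0 := by
    rw [Finset.univ_eq_attach, Finset.sum_attach Δ (fun δ => g δ • δ)]
    exact hg
  intro δ hδ
  exact linearIndependent_iff'.mp indep Finset.univ (fun i => g ↑i) h0 ⟨δ, hδ⟩ (Finset.mem_univ _)

variable {Φ : Set E} {Δ : Finset E}

/-- Expansion of any vector in the root basis, with coefficients given by dual weights. -/
lemma aux_expand (hbase : IsRootSystemBase Φ Δ) (w : E → E)
    (hw : ∀ α ∈ Δ, ∀ β ∈ Δ, ⟪w α, β⟫ = if α = β then (1 : ℝ) else 0)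
    (x : E) : ∑ δ ∈ Δ, ⟪w δ, x⟫ • δ = x := by
  classical
  have hx : x ∈ Submodule.span ℝ (Δ : Set E) := by
    rw [hbase.span_top]; trivial
  induction hx using Submodule.span_induction with
  | mem y hy =>
    rw [Finset.sum_congr rfl (fun δ hδ => by rw [hw δ hδ y hy])]
    simp [ite_smul, Finset.sum_ite_eq', Finset.mem_coe.mp hy]
  | zero => simp
  | add y z hy hz ihy ihz =>
    rw [Finset.sum_congr rfl (fun δ _ => by rw [inner_add_right, add_smul]),
      Finset.sum_add_distrib, ihy, ihz]
  | smul r y hy ih =>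
    rw [Finset.sum_congr rfl (fun δ _ => by rw [real_inner_smul_right, mul_smul]),
      ← Finset.smul_sum, ih]

/-- Expansion of a simple root in the dual-weight basis. -/
lemma aux_expand' (hbase : IsRootSystemBase Φ Δ) (w : E → E)
    (hw : ∀ α ∈ Δ, ∀ β ∈ Δ, ⟪w α, β⟫ = if α = β then (1 : ℝ) else 0)
    {γ : E} (hγ : γ ∈ Δ) : ∑ δ ∈ Δ, ⟪γ, δ⟫ • w δ = γ := by
  classical
  set u := γ - ∑ δ ∈ Δ, ⟪γ, δ⟫ • w δ with hu
  have horth : ∀ ε ∈ Δ, ⟪u, ε⟫ = 0 := by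
    intro ε hε
    rw [hu, inner_sub_left, sum_inner]
    have h2 : ∀ δ ∈ Δ, ⟪(⟪γ, δ⟫ : ℝ) • w δ, ε⟫ = ⟪γ, δ⟫ * (if δ = ε then (1:ℝ) else 0) := by
      intro δ hδ
      rw [real_inner_smul_left, hw δ hδ ε hε]
    rw [Finset.sum_congr rfl h2]
    simp [mul_ite, Finset.sum_ite_eq', hε]
  have hall : ∀ x ∈ Submodule.span ℝ ((Δ : Set E)), ⟪u, x⟫ = 0 := by
    intro x hx
    induction hx using Submodule.span_induction with
    | mem y hy => exact horth y hy
    | zero => simp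
    | add y z hy hz ihy ihz => rw [inner_add_right, ihy, ihz, add_zero]
    | smul r y hy ih => rw [real_inner_smul_right, ih, mul_zero]
  have h0 : ⟪u, u⟫ = (0:ℝ) := hall u (by rw [hbase.span_top]; trivial)
  have hu0 : u = 0 := inner_self_eq_zero.mp h0
  rw [hu, sub_eq_zero] at hu0
  exact hu0.symm

/-- The difference of two distinct simple roots is not a root. -/
lemma aux_sub_notMem (hbase : IsRootSystemBase Φ Δ)
    {β γ : E} (hβ : β ∈ Δ) (hγ : γ ∈ Δ) (hne : β ≠ γ) : β - γ ∉ Φ := by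
  intro hmem
  rcases hbase.pos_or_neg _ hmem with ⟨c, hc0, hcs⟩ | ⟨c, hc0, hcs⟩
  · -- β - γ = ∑ c δ • δ
    have key : ∑ δ ∈ Δ, (c δ - (if δ = β then (1:ℝ) else 0) + (if δ = γ then (1:ℝ) else 0)) • δ
        = 0 := by
      simp only [sub_smul, add_smul, ite_smul, one_smul, zero_smul]
      rw [Finset.sum_add_distrib, Finset.sum_sub_distrib, Finset.sum_ite_eq' Δ β (fun δ => δ),
        Finset.sum_ite_eq' Δ γ (fun δ => δ), if_pos hβ, if_pos hγ, ← hcs]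
      abel
    have := aux_indep hbase.indep _ key γ hγ
    rw [if_neg (fun h => hne h.symm), if_pos rfl] at this
    have := hc0 γ hγ
    linarith
  · -- β - γ = -∑ c δ • δ
    have key : ∑ δ ∈ Δ, (c δ + (if δ = β then (1:ℝ) else 0) - (if δ = γ then (1:ℝ) else 0)) • δ
        = 0 := by
      simp only [sub_smul, add_smul, ite_smul, one_smul, zero_smul]
      rw [Finset.sum_sub_distrib, Finset.sum_add_distrib, Finset.sum_ite_eq' Δ β (fun δ => δ),
        Finset.sum_ite_eq' Δ γ (fun δ => δ), if_pos hβ, if_pos hγ]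
      have : ∑ δ ∈ Δ, c δ • δ = -(β - γ) := by rw [hcs]; abel
      rw [this]; abel
    have := aux_indep hbase.indep _ key β hβ
    rw [if_pos rfl, if_neg hne] at this
    have := hc0 β hβ
    linarith

/-- Distinct simple roots make an obtuse angle. -/
lemma aux_obtuse (hbase : IsRootSystemBase Φ Δ)
    {β γ : E} (hβ : β ∈ Δ) (hγ : γ ∈ Δ) (hne : β ≠ γ) : ⟪β, γ⟫ ≤ 0 := by
  by_contra hpos
  push_neg at hpos
  have hβΦ : β ∈ Φ := hbase.subset hβ
  have hγΦ : γ ∈ Φ := hbase.subset hγ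
  have hββ : 0 < ⟪β, β⟫ := aux_inner_self_pos (hbase.ne_zero β hβΦ)
  have hγγ : 0 < ⟪γ, γ⟫ := aux_inner_self_pos (hbase.ne_zero γ hγΦ)
  obtain ⟨n, hn⟩ := hbase.crystallographic β hβΦ γ hγΦ
  obtain ⟨m, hm⟩ := hbase.crystallographic γ hγΦ β hβΦ
  have hγβ : ⟪γ, β⟫ = ⟪β, γ⟫ := real_inner_comm β γ
  have hnpos : (0:ℝ) < n := by
    rw [← hn]; positivity
  have hmpos : (0:ℝ) < m := by
    rw [← hm, hγβ]; positivity
  have hn1 : (1:ℤ) ≤ n := by exact_mod_cast hnpos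
  have hm1 : (1:ℤ) ≤ m := by exact_mod_cast hmpos
  have hCS : ⟪β, γ⟫ * ⟪β, γ⟫ ≤ ⟪β, β⟫ * ⟪γ, γ⟫ := real_inner_mul_inner_self_le β γ
  have hnm : (n:ℝ) * m ≤ 4 := by
    rw [← hn, ← hm, hγβ]
    rw [div_mul_div_comm]
    rw [div_le_iff₀ (by positivity)]
    nlinarith
  have hnm' : n * m ≤ 4 := by exact_mod_cast hnm
  -- cases
  by_cases hmm : m = 1
  · -- β - γ ∈ Φ
    have := hbase.reflect_mem γ hγΦ β hβΦ
    rw [hm, hmm] at this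
    simp only [Int.cast_one, one_smul] at this
    exact aux_sub_notMem hbase hβ hγ hne this
  · by_cases hnn : n = 1
    · have := hbase.reflect_mem β hβΦ γ hγΦ
      rw [hn, hnn] at this
      simp only [Int.cast_one, one_smul] at this
      exact aux_sub_notMem hbase hγ hβ (fun h => hne h.symm) this
    · -- n, m ≥ 2, so n = m = 2 and β = γ
      have hn2 : (2:ℤ) ≤ n := by omega
      have hm2 : (2:ℤ) ≤ m := by omega
      have hn2' : n = 2 := by nlinarith
      have hm2' : m = 2 := by nlinarith
      -- 2⟪β,γ⟫ = ⟪β,β⟫ and 2⟪β,γ⟫ = ⟪γ,γ⟫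
      have e1 : 2 * ⟪β, γ⟫ = 2 * ⟪β, β⟫ := by
        have : 2 * ⟪β, γ⟫ / ⟪β, β⟫ = (2:ℝ) := by rw [hn, hn2']; norm_num
        field_simp at this
        linarith
      have e2 : 2 * ⟪β, γ⟫ = 2 * ⟪γ, γ⟫ := by
        have : 2 * ⟪γ, β⟫ / ⟪γ, γ⟫ = (2:ℝ) := by rw [hm, hm2']; norm_num
        rw [hγβ] at this
        field_simp at this
        linarith
      have : ⟪β - γ, β - γ⟫ = (0:ℝ) := by
        rw [inner_sub_sub_self]
        rw [hγβ] at *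
        linarith
      have : β - γ = 0 := inner_self_eq_zero.mp this
      exact hne (sub_eq_zero.mp this)

/-- The Gram matrix of the dual weights has nonnegative entries. -/
lemma aux_gram_nonneg (hbase : IsRootSystemBase Φ Δ) (w : E → E)
    (hw : ∀ α ∈ Δ, ∀ β ∈ Δ, ⟪w α, β⟫ = if α = β then (1 : ℝ) else 0)
    {γ β : E} (hγ : γ ∈ Δ) (hβ : β ∈ Δ) : 0 ≤ ⟪w γ, w β⟫ := by
  classical
  -- coordinates of w β in the root basis
  set r : E → ℝ := fun δ => ⟪w δ, w β⟫ with hr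
  have hwb : ∑ δ ∈ Δ, r δ • δ = w β := aux_expand hbase w hw (w β)
  set N : Finset E := Δ.filter (fun δ => r δ < 0) with hN
  have hNΔ : N ⊆ Δ := Finset.filter_subset _ _
  set v : E := ∑ δ ∈ N, (-r δ) • δ with hv
  have h1 : 0 ≤ ⟪w β, v⟫ := by
    rw [hv, inner_sum]
    refine Finset.sum_nonneg fun δ hδ => ?_
    rw [real_inner_smul_right, hw β hβ δ (hNΔ hδ)]
    have : r δ < 0 := (Finset.mem_filter.mp hδ).2
    have h2 : (0:ℝ) ≤ if β = δ then (1:ℝ) else 0 := by positivity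
    nlinarith
  have h2 : w β + v = ∑ δ ∈ Δ \ N, r δ • δ := by
    rw [← hwb, hv, ← Finset.sum_sdiff hNΔ (f := fun δ => r δ • δ)]
    rw [add_assoc, ← Finset.sum_add_distrib]
    have : ∀ δ ∈ N, r δ • δ + (-r δ) • δ = (0:E) := by
      intro δ _; rw [← add_smul]; simp
    rw [Finset.sum_congr rfl this]
    simp
  have h3 : ⟪w β + v, v⟫ ≤ 0 := by
    rw [h2, hv, sum_inner]
    refine Finset.sum_nonpos fun δ hδ => ?_
    rw [inner_sum]
    refine Finset.sum_nonpos fun ε hε => ?_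
    rw [real_inner_smul_left, real_inner_smul_right]
    have hδΔ : δ ∈ Δ := (Finset.mem_sdiff.mp hδ).1
    have hδN : δ ∉ N := (Finset.mem_sdiff.mp hδ).2
    have hrδ : 0 ≤ r δ := by
      by_contra h; push_neg at h
      exact hδN (Finset.mem_filter.mpr ⟨hδΔ, h⟩)
    have hrε : r ε < 0 := (Finset.mem_filter.mp hε).2
    have hne : δ ≠ ε := fun h => hδN (h ▸ hε)
    have hobt : ⟪δ, ε⟫ ≤ 0 := aux_obtuse hbase hδΔ (hNΔ hε) hne
    nlinarith [mul_nonneg hrδ (neg_nonneg.2 hrε.le)]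
  have hvv : ⟪v, v⟫ ≤ (0:ℝ) := by
    have : ⟪w β + v, v⟫ = ⟪w β, v⟫ + ⟪v, v⟫ := inner_add_left _ _ _
    linarith
  have hv0 : v = 0 := by
    have h0 : ⟪v, v⟫ = (0:ℝ) := le_antisymm hvv real_inner_self_nonneg
    exact inner_self_eq_zero.mp h0
  -- hence N = ∅
  have hNg : ∀ δ ∈ Δ, (if δ ∈ N then -r δ else 0) = 0 := by
    apply aux_indep hbase.indep
    rw [Finset.sum_congr rfl (fun δ _ => by rw [ite_smul, zero_smul]),
      Finset.sum_ite_mem, Finset.inter_eq_right.mpr hNΔ, ← hv, hv0]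
  by_contra hneg
  push_neg at hneg
  have hγN : γ ∈ N := Finset.mem_filter.mpr ⟨hγ, hneg⟩
  have := hNg γ hγ
  rw [if_pos hγN] at this
  have : r γ = 0 := by linarith [neg_eq_zero.mp this]
  exact absurd this (ne_of_lt hneg)

/-- `d` is positive. -/
lemma aux_d_pos (hbase : IsRootSystemBase Φ Δ) (w : E → E)
    (hw : ∀ α ∈ Δ, ∀ β ∈ Δ, ⟪w α, β⟫ = if α = β then (1 : ℝ) else 0)
    (d : E → ℝ) (hd : ∀ γ ∈ Δ, d γ = ∑ β ∈ Δ, ⟪w γ, w β⟫)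
    {γ : E} (hγ : γ ∈ Δ) : 0 < d γ := by
  have hwγ : w γ ≠ 0 := by
    intro h
    have := hw γ hγ γ hγ
    rw [h, if_pos rfl] at this
    simp at this
  have hself : 0 < ⟪w γ, w γ⟫ := aux_inner_self_pos hwγ
  rw [hd γ hγ]
  calc (0:ℝ) < ⟪w γ, w γ⟫ := hself
    _ ≤ ∑ β ∈ Δ, ⟪w γ, w β⟫ :=
      Finset.single_le_sum (fun β hβ => aux_gram_nonneg hbase w hw hγ hβ) hγ

/-- The key identity `∑_δ ⟪γ, δ⟫ d δ = 1` for `γ ∈ Δ`. -/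
lemma aux_sum_one (hbase : IsRootSystemBase Φ Δ) (w : E → E)
    (hw : ∀ α ∈ Δ, ∀ β ∈ Δ, ⟪w α, β⟫ = if α = β then (1 : ℝ) else 0)
    (d : E → ℝ) (hd : ∀ γ ∈ Δ, d γ = ∑ β ∈ Δ, ⟪w γ, w β⟫)
    {γ : E} (hγ : γ ∈ Δ) : ∑ δ ∈ Δ, ⟪γ, δ⟫ * d δ = 1 := by
  classical
  have h1 : ∀ β ∈ Δ, ∑ δ ∈ Δ, ⟪γ, δ⟫ * ⟪w δ, w β⟫ = ⟪γ, w β⟫ := by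
    intro β hβ
    conv_rhs => rw [← aux_expand' hbase w hw hγ]
    rw [sum_inner]
    exact Finset.sum_congr rfl fun δ _ => (real_inner_smul_left _ _ _).symm
  calc ∑ δ ∈ Δ, ⟪γ, δ⟫ * d δ
      = ∑ δ ∈ Δ, ∑ β ∈ Δ, ⟪γ, δ⟫ * ⟪w δ, w β⟫ := by
        refine Finset.sum_congr rfl fun δ hδ => ?_
        rw [hd δ hδ, Finset.mul_sum]
    _ = ∑ β ∈ Δ, ∑ δ ∈ Δ, ⟪γ, δ⟫ * ⟪w δ, w β⟫ := Finset.sum_comm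
    _ = ∑ β ∈ Δ, ⟪γ, w β⟫ := Finset.sum_congr rfl h1
    _ = 1 := by
        rw [Finset.sum_congr rfl (fun β hβ => by
          rw [real_inner_comm, hw β hβ γ hγ])]
        simp [Finset.sum_ite_eq', hγ]

end Aux

open Filter in
/-- Corollary of the appendix (Li): under the connectedness assumption (encoded by
`(w_α, w_β) > 0` for some `β ∈ Δ∖(I∪{α})`), if `β(a_n) → ∞` for all
`β ∈ Δ∖(I∪{α})` and the maximality conditions hold, then `α(a_n) → ∞`. -/
theorem root_tendsto_atTop
    {E : Type*} [NormedAddCommGroup E] [InnerProductSpace ℝ E] [FiniteDimensional ℝ E]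
    [DecidableEq E] (Φ : Set E) (Δ : Finset E) (hbase : IsRootSystemBase Φ Δ)
    (w : E → E) (hw : ∀ α ∈ Δ, ∀ β ∈ Δ, ⟪w α, β⟫ = if α = β then (1 : ℝ) else 0)
    (d : E → ℝ) (hd : ∀ γ ∈ Δ, d γ = ∑ β ∈ Δ, ⟪w γ, w β⟫)
    (α : E) (hα : α ∈ Δ) (I : Finset E) (hI : I ⊆ Δ.erase α)
    (hconn : ∃ β ∈ Δ \ insert α I, 0 < ⟪w α, w β⟫)
    (a : ℕ → Module.Dual ℝ E)
    (ha : ∀ n, ∀ β ∈ I, a n β = 0)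
    (htend : ∀ β ∈ Δ \ insert α I, Tendsto (fun n => a n β) atTop atTop)
    (hmax : ∀ n, ∀ β ∈ Δ \ I, (d α)⁻¹ * a n (w α) ≥ (d β)⁻¹ * a n (w β))
    (hnonneg : ∀ n, (d α)⁻¹ * a n (w α) ≥ 0) :
    Tendsto (fun n => a n α) atTop atTop := by
  classical
  obtain ⟨β₀, hβ₀m, hc⟩ := hconn
  have hβ₀Δ : β₀ ∈ Δ := (Finset.mem_sdiff.mp hβ₀m).1
  have hβ₀ni : β₀ ∉ insert α I := (Finset.mem_sdiff.mp hβ₀m).2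
  have hβ₀α : β₀ ≠ α := fun h => hβ₀ni (h ▸ Finset.mem_insert_self α I)
  have hsubΔ : insert α I ⊆ Δ := by
    intro x hx
    rcases Finset.mem_insert.mp hx with h | h
    · exact h ▸ hα
    · exact Finset.mem_of_mem_erase (hI h)
  have hαI : α ∉ I := fun h => (Finset.ne_of_mem_erase (hI h)) rfl
  have dpos : ∀ γ ∈ Δ, 0 < d γ := fun γ hγ => aux_d_pos hbase w hw d hd hγ
  have gram : ∀ γ ∈ Δ, ∀ β ∈ Δ, 0 ≤ ⟪w γ, w β⟫ := fun γ hγ β hβ =>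
    aux_gram_nonneg hbase w hw hγ hβ
  set q : ℝ := ⟪w α, w α⟫ with hq
  -- Key pointwise inequality:  (d α)⁻¹ * aₙ(w α) ≤ aₙ(α)
  have key1 : ∀ n, (d α)⁻¹ * a n (w α) ≤ a n α := by
    intro n
    set z : E → ℝ := fun δ => (d δ)⁻¹ * a n (w δ) with hz
    have hdz : ∀ δ ∈ Δ, a n (w δ) = d δ * z δ := by
      intro δ hδ
      exact (mul_inv_cancel_left₀ (dpos δ hδ).ne' _).symm
    have expand_a : ∀ γ ∈ Δ, a n γ = ∑ δ ∈ Δ, ⟪γ, δ⟫ * (d δ * z δ) := by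
      intro γ hγ
      conv_lhs => rw [← aux_expand' hbase w hw hγ]
      rw [map_sum]
      refine Finset.sum_congr rfl fun δ hδ => ?_
      rw [map_smul, smul_eq_mul, hdz δ hδ]
    have lower : ∀ γ ∈ Δ, (∀ δ ∈ Δ, z δ ≤ z γ) →
        z γ ≤ ∑ δ ∈ Δ, ⟪γ, δ⟫ * (d δ * z δ) := by
      intro γ hγ hmaxγ
      have h1 : z γ = ∑ δ ∈ Δ, z γ * (⟪γ, δ⟫ * d δ) := by
        rw [← Finset.mul_sum, aux_sum_one hbase w hw d hd hγ, mul_one]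
      rw [h1]
      refine Finset.sum_le_sum fun δ hδ => ?_
      by_cases hδγ : δ = γ
      · subst hδγ; ring_nf; exact le_refl _
      · have hobt : ⟪γ, δ⟫ ≤ 0 := aux_obtuse hbase hγ hδ (fun h => hδγ h.symm)
        have hdδ : 0 < d δ := dpos δ hδ
        have hzz : z δ ≤ z γ := hmaxγ δ hδ
        nlinarith [mul_nonneg (sub_nonneg.2 hzz) (mul_nonneg (neg_nonneg.2 hobt) hdδ.le)]
    have step1 : ∀ δ ∈ Δ, z δ ≤ z α := by
      obtain ⟨γ, hγΔ, hγmax⟩ := Δ.exists_max_image z ⟨α, hα⟩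
      by_cases hγI : γ ∈ I
      · by_cases hzγ : z γ ≤ 0
        · intro δ hδ
          exact le_trans (le_trans (hγmax δ hδ) hzγ) (hnonneg n)
        · push_neg at hzγ
          exfalso
          have e0 : (0:ℝ) = ∑ δ ∈ Δ, ⟪γ, δ⟫ * (d δ * z δ) := by
            rw [← expand_a γ hγΔ, ha n γ hγI]
          have := lower γ hγΔ hγmax
          linarith
      · intro δ hδ
        exact le_trans (hγmax δ hδ) (hmax n γ (Finset.mem_sdiff.mpr ⟨hγΔ, hγI⟩))
    have step2 : z α ≤ a n α := by
      rw [expand_a α hα]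
      exact lower α hα step1
    exact step2
  -- Expansion of aₙ(w α)
  have key2 : ∀ n, a n (w α) = q * a n α + ∑ β ∈ Δ \ insert α I, ⟪w α, w β⟫ * a n β := by
    intro n
    have h1 : a n (w α) = ∑ β ∈ Δ, ⟪w α, w β⟫ * a n β := by
      conv_lhs => rw [← aux_expand hbase w hw (w α)]
      rw [map_sum]
      refine Finset.sum_congr rfl fun β hβ => ?_
      rw [map_smul, smul_eq_mul, real_inner_comm]
    rw [h1, ← Finset.sum_sdiff hsubΔ (f := fun β => ⟪w α, w β⟫ * a n β),
      Finset.sum_insert hαI]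
    have h2 : ∑ β ∈ I, ⟪w α, w β⟫ * a n β = 0 := by
      refine Finset.sum_eq_zero fun β hβ => ?_
      rw [ha n β hβ, mul_zero]
    rw [h2, add_zero]
    ring
  -- the spectral gap
  have hgap : 0 < d α - q := by
    have hpair : ∑ β ∈ ({α, β₀} : Finset E), ⟪w α, w β⟫ ≤ d α := by
      rw [hd α hα]
      refine Finset.sum_le_sum_of_subset_of_nonneg ?_ fun β hβ _ => gram α hα β hβ
      intro x hx
      rcases Finset.mem_insert.mp hx with h | h
      · exact h ▸ hα
      · exact (Finset.mem_singleton.mp h) ▸ hβ₀Δ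
    rw [Finset.sum_pair hβ₀α.symm] at hpair
    linarith
  -- eventually all relevant coordinates are nonnegative
  have hev : ∀ᶠ n in atTop, ∀ β ∈ Δ \ insert α I, 0 ≤ a n β := by
    rw [Filter.eventually_all_finset]
    exact fun β hβ => (htend β hβ).eventually_ge_atTop 0
  refine tendsto_atTop_mono' atTop ?_
    ((htend β₀ hβ₀m).const_mul_atTop (r := ⟪w α, w β₀⟫ / (d α - q)) (div_pos hc hgap))
  filter_upwards [hev] with n hn
  have h1 : a n (w α) ≤ d α * a n α := by
    have := key1 n
    have hdα : 0 < d α := dpos α hα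
    calc a n (w α) = d α * ((d α)⁻¹ * a n (w α)) := by field_simp
      _ ≤ d α * a n α := by
        exact mul_le_mul_of_nonneg_left this hdα.le
  have h2 : ⟪w α, w β₀⟫ * a n β₀ ≤ ∑ β ∈ Δ \ insert α I, ⟪w α, w β⟫ * a n β := by
    refine Finset.single_le_sum (f := fun β => ⟪w α, w β⟫ * a n β) (fun β hβ => ?_) hβ₀m
    exact mul_nonneg (gram α hα β (Finset.mem_sdiff.mp hβ).1) (hn β hβ)
  have h3 : ⟪w α, w β₀⟫ * a n β₀ ≤ (d α - q) * a n α := by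
    have := key2 n
    linarith
  show ⟪w α, w β₀⟫ / (d α - q) * a n β₀ ≤ a n α
  rw [div_mul_eq_mul_div, div_le_iff₀ hgap]
  linarith [h3]
end
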